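/- arXiv:1202.1461 — 4 statements merged into one kernel-verified Lean document; each statement's English description precedes it below -/
import Mathlib

section
/- Let (Ω,Σ,μ) be a σ-finite measure space with the finite subset property, X a separable Banach space, and M: Ω → L(X) a map such that s ↦ M(s)x is Bochner measurable for every x ∈ X. Then the induced multiplication operator 𝓜 on L^p(Ω,X) (1 ≤ p ≤ ∞), defined by (𝓜f)(s) = M(s)f(s), is bounded if and only if the function s ↦ ‖M(s)‖ is essentially bounded, and in that case ‖𝓜‖ = ess sup_{s∈Ω} ‖M(s)‖. -/
open MeasureTheory Filter Topology ENNReal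

section Aux

variable {Ω X : Type*} [MeasurableSpace Ω] [NormedAddCommGroup X]
    [NormedSpace ℂ X]

lemma aux_sm_simple (M : Ω → X →L[ℂ] X)
    (hM : ∀ x : X, StronglyMeasurable fun s => M s x) (g : SimpleFunc Ω X) :
    StronglyMeasurable fun s => M s (g s) := by
  induction g using SimpleFunc.induction with
  | @const c A hA =>
    have : (fun s => M s ((SimpleFunc.piecewise A hA (SimpleFunc.const Ω c)
        (SimpleFunc.const Ω 0)) s)) = fun s => A.indicator (fun t => M t c) s := by
      funext s
      by_cases hs : s ∈ A <;>
        simp [SimpleFunc.piecewise_apply, hs, Set.indicator_of_mem, Set.indicator_of_notMem]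
    rw [this]
    exact (hM c).indicator hA
  | @add g1 g2 hdis h1 h2 =>
    have : (fun s => M s ((g1 + g2) s)) = (fun s => M s (g1 s)) + fun s => M s (g2 s) := by
      funext s; simp [map_add]
    rw [this]
    exact h1.add h2

lemma aux_sm (M : Ω → X →L[ℂ] X)
    (hM : ∀ x : X, StronglyMeasurable fun s => M s x) {f : Ω → X}
    (hf : StronglyMeasurable f) :
    StronglyMeasurable fun s => M s (f s) := by
  refine stronglyMeasurable_of_tendsto (f := fun n s => M s (hf.approx n s)) atTop
    (fun n => aux_sm_simple M hM (hf.approx n)) ?_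
  rw [tendsto_pi_nhds]
  intro s
  exact ((M s).continuous.tendsto (f s)).comp (hf.tendsto_approx s)

variable (μ : Measure Ω) {p : ℝ≥0∞} [Fact (1 ≤ p)]

lemma aux_memLp {C : ℝ} (M : Ω → X →L[ℂ] X)
    (hM : ∀ x : X, StronglyMeasurable fun s => M s x)
    (hC : ∀ᵐ s ∂μ, ‖M s‖ ≤ C) (f : Lp X p μ) :
    MemLp (fun s => M s (f s)) p μ := by
  have hmk := (Lp.aestronglyMeasurable f)
  constructor
  · exact ⟨fun s => M s (hmk.mk _ s), aux_sm M hM hmk.stronglyMeasurable_mk,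
      hmk.ae_eq_mk.mono fun s hs => by simp only [hs]⟩
  · calc eLpNorm (fun s => M s (f s)) p μ
        ≤ ENNReal.ofReal C * eLpNorm f p μ := by
          refine eLpNorm_le_mul_eLpNorm_of_ae_le_mul ?_ p
          filter_upwards [hC] with s hs
          exact ((M s).le_opNorm _).trans (mul_le_mul_of_nonneg_right hs (norm_nonneg _))
      _ < ⊤ := ENNReal.mul_lt_top ENNReal.ofReal_lt_top (Lp.eLpNorm_lt_top f)

lemma aux_exists {C : ℝ} (M : Ω → X →L[ℂ] X)
    (hM : ∀ x : X, StronglyMeasurable fun s => M s x)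
    (hC0 : 0 ≤ C) (hC : ∀ᵐ s ∂μ, ‖M s‖ ≤ C) :
    ∃ 𝓜 : Lp X p μ →L[ℂ] Lp X p μ,
      ∀ f : Lp X p μ, ∀ᵐ s ∂μ, (𝓜 f : Ω →ₘ[μ] X) s = M s ((f : Ω →ₘ[μ] X) s) := by
  have hmem : ∀ f : Lp X p μ, MemLp (fun s => M s (f s)) p μ := aux_memLp μ M hM hC
  have hbound : ∀ f : Lp X p μ,
      eLpNorm (fun s => M s (f s)) p μ ≤ ENNReal.ofReal C * eLpNorm f p μ := by
    intro f
    refine eLpNorm_le_mul_eLpNorm_of_ae_le_mul ?_ p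
    filter_upwards [hC] with s hs
    exact ((M s).le_opNorm _).trans (mul_le_mul_of_nonneg_right hs (norm_nonneg _))
  set T : Lp X p μ →ₗ[ℂ] Lp X p μ :=
    { toFun := fun f => (hmem f).toLp (fun s => M s (f s))
      map_add' := by
        intro f g
        refine MemLp.toLp_congr (hmem (f + g)) ((hmem f).add (hmem g)) ?_ |>.trans
          (MemLp.toLp_add (hmem f) (hmem g))
        filter_upwards [Lp.coeFn_add f g] with s hs
        simp only [hs, Pi.add_apply, map_add]
      map_smul' := by
        intro c f
        refine MemLp.toLp_congr (hmem (c • f)) ((hmem f).const_smul c) ?_ |>.trans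
          (MemLp.toLp_const_smul c (hmem f))
        filter_upwards [Lp.coeFn_smul c f] with s hs
        simp only [hs, Pi.smul_apply, _root_.map_smul] } with hT
  refine ⟨T.mkContinuous C ?_, ?_⟩
  · intro f
    rw [hT]
    simp only [LinearMap.coe_mk, AddHom.coe_mk]
    rw [Lp.norm_toLp _ (hmem f), Lp.norm_def]
    calc (eLpNorm (fun s => M s (f s)) p μ).toReal
        ≤ (ENNReal.ofReal C * eLpNorm f p μ).toReal := by
          refine ENNReal.toReal_mono ?_ (hbound f)
          exact ENNReal.mul_ne_top ENNReal.ofReal_ne_top (Lp.eLpNorm_ne_top f)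
      _ = C * (eLpNorm f p μ).toReal := by
          rw [ENNReal.toReal_mul, ENNReal.toReal_ofReal hC0]
  · intro f
    exact (MemLp.coeFn_toLp (hmem f))

lemma aux_upper {C : ℝ} (M : Ω → X →L[ℂ] X)
    (𝓜 : Lp X p μ →L[ℂ] Lp X p μ)
    (h𝓜 : ∀ f : Lp X p μ, ∀ᵐ s ∂μ, (𝓜 f : Ω →ₘ[μ] X) s = M s ((f : Ω →ₘ[μ] X) s))
    (hC0 : 0 ≤ C) (hC : ∀ᵐ s ∂μ, ‖M s‖ ≤ C) : ‖𝓜‖ ≤ C := by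
  refine ContinuousLinearMap.opNorm_le_bound _ hC0 fun f => ?_
  have h1 : ∀ᵐ s ∂μ, ‖(𝓜 f : Ω → X) s‖ ≤ C * ‖(f : Ω → X) s‖ := by
    filter_upwards [hC, h𝓜 f] with s hs heq
    rw [heq]
    exact ((M s).le_opNorm _).trans (mul_le_mul_of_nonneg_right hs (norm_nonneg _))
  rw [Lp.norm_def, Lp.norm_def]
  calc (eLpNorm (𝓜 f : Ω → X) p μ).toReal
      ≤ (ENNReal.ofReal C * eLpNorm (f : Ω → X) p μ).toReal := by
        refine ENNReal.toReal_mono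
          (ENNReal.mul_ne_top ENNReal.ofReal_ne_top (Lp.eLpNorm_ne_top f)) ?_
        exact eLpNorm_le_mul_eLpNorm_of_ae_le_mul h1 p
    _ = C * (eLpNorm (f : Ω → X) p μ).toReal := by
        rw [ENNReal.toReal_mul, ENNReal.toReal_ofReal hC0]

lemma aux_lower [TopologicalSpace.SeparableSpace X]
    (hfsp : ∀ Y : Set Ω, MeasurableSet Y → 0 < μ Y →
      ∃ Z : Set Ω, MeasurableSet Z ∧ Z ⊆ Y ∧ 0 < μ Z ∧ μ Z < ⊤)
    (M : Ω → X →L[ℂ] X)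
    (hM : ∀ x : X, StronglyMeasurable fun s => M s x)
    (𝓜 : Lp X p μ →L[ℂ] Lp X p μ)
    (h𝓜 : ∀ f : Lp X p μ, ∀ᵐ s ∂μ, (𝓜 f : Ω →ₘ[μ] X) s = M s ((f : Ω →ₘ[μ] X) s))
    {c : ℝ} (hc : 0 ≤ c) (hpos : 0 < μ {s | c < ‖M s‖}) : c ≤ ‖𝓜‖ := by
  have hp0 : p ≠ 0 := (zero_lt_one.trans_le Fact.out).ne'
  have : Nonempty X := ⟨0⟩
  obtain ⟨u, hu⟩ := TopologicalSpace.exists_dense_seq X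
  -- find a single vector witnessing on a positive measure set
  have hsub : {s | c < ‖M s‖} ⊆ ⋃ n, {s | c * ‖u n‖ < ‖M s (u n)‖} := by
    intro s hs
    have hex : ∃ x : X, c * ‖x‖ < ‖M s x‖ := by
      by_contra h
      push_neg at h
      exact absurd ((M s).opNorm_le_bound hc fun x => h x) (not_le.2 hs)
    obtain ⟨x₀, hx₀⟩ := hex
    have hopen : IsOpen {x : X | c * ‖x‖ < ‖M s x‖} :=
      isOpen_lt (continuous_const.mul continuous_norm) (M s).continuous.norm
    obtain ⟨n, hn⟩ := hu.exists_mem_open hopen ⟨x₀, hx₀⟩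
    exact Set.mem_iUnion.2 ⟨n, hn⟩
  have hnn : ∃ n, 0 < μ {s | c * ‖u n‖ < ‖M s (u n)‖} := by
    by_contra h
    push_neg at h
    simp only [le_zero_iff] at h
    have : μ {s | c < ‖M s‖} = 0 :=
      le_antisymm ((measure_mono hsub).trans (measure_iUnion_null h).le) (zero_le ..)
    exact hpos.ne' this
  obtain ⟨n, hn⟩ := hnn
  set x := u n with hx
  have hmeas : MeasurableSet {s | c * ‖x‖ < ‖M s x‖} :=
    measurableSet_lt measurable_const (hM x).norm.measurable
  obtain ⟨Z, hZm, hZsub, hZpos, hZfin⟩ := hfsp _ hmeas hn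
  have hxne : ‖x‖ ≠ 0 := by
    obtain ⟨s₀, hs₀⟩ := nonempty_of_measure_ne_zero hZpos.ne'
    intro h0
    have hx0 : x = 0 := norm_eq_zero.1 h0
    have := hZsub hs₀
    rw [Set.mem_setOf_eq, hx0] at this
    simp at this
  -- the test function
  set g : Ω → X := Z.indicator (fun _ => x) with hg
  have hgmem : MemLp g p μ := memLp_indicator_const p hZm x (Or.inr hZfin.ne)
  set f : Lp X p μ := hgmem.toLp g with hf
  have hfnorm : ‖f‖ = (eLpNorm g p μ).toReal := Lp.norm_toLp g hgmem
  have hgnorm : eLpNorm g p μ = ‖x‖₊ * μ Z ^ (1 / p.toReal) :=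
    eLpNorm_indicator_const' hZm hZpos.ne' hp0
  have hrp_ne : μ Z ^ (1 / p.toReal) ≠ 0 :=
    (ENNReal.rpow_pos hZpos hZfin.ne).ne'
  have hrp_fin : μ Z ^ (1 / p.toReal) ≠ ⊤ := by
    refine ENNReal.rpow_ne_top_of_nonneg ?_ hZfin.ne
    positivity
  have hfpos : 0 < ‖f‖ := by
    rw [hfnorm, hgnorm]
    refine ENNReal.toReal_pos ?_ ?_
    · exact mul_ne_zero (by simpa using hxne) hrp_ne
    · exact ENNReal.mul_ne_top ENNReal.coe_ne_top hrp_fin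
  -- lower bound on ‖𝓜 f‖
  set h : Ω → X := Z.indicator (fun _ => (c : ℂ) • x) with hh
  have hhsmul : h = (c : ℂ) • g := by
    funext s
    by_cases hs : s ∈ Z <;> simp [hh, hg, Set.indicator_of_mem, Set.indicator_of_notMem, hs]
  have hle : ∀ᵐ s ∂μ, ‖h s‖ ≤ ‖(𝓜 f : Ω → X) s‖ := by
    filter_upwards [h𝓜 f, hgmem.coeFn_toLp] with s hs hfs
    rw [hs, hfs]
    by_cases hsZ : s ∈ Z
    · have hlt := hZsub hsZ
      rw [Set.mem_setOf_eq] at hlt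
      rw [hh, hg, Set.indicator_of_mem hsZ, Set.indicator_of_mem hsZ]
      calc ‖(c : ℂ) • x‖ = c * ‖x‖ := by
            rw [norm_smul, Complex.norm_real, Real.norm_eq_abs, abs_of_nonneg hc]
        _ ≤ ‖M s x‖ := hlt.le
    · rw [hh, hg, Set.indicator_of_notMem hsZ, Set.indicator_of_notMem hsZ]
      simp
  have hkey : c * ‖f‖ ≤ ‖𝓜 f‖ := by
    have h1 : eLpNorm h p μ ≤ eLpNorm (𝓜 f : Ω → X) p μ := eLpNorm_mono_ae hle
    have h2 : eLpNorm h p μ = ‖(c : ℂ)‖₊ * eLpNorm g p μ := by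
      rw [hhsmul, eLpNorm_const_smul, enorm_eq_nnnorm]
    have h3 : (eLpNorm h p μ).toReal = c * (eLpNorm g p μ).toReal := by
      rw [h2, ENNReal.toReal_mul, ENNReal.coe_toReal, coe_nnnorm, Complex.norm_real,
        Real.norm_eq_abs, abs_of_nonneg hc]
    rw [hfnorm, Lp.norm_def, ← h3]
    exact ENNReal.toReal_mono (Lp.eLpNorm_ne_top (𝓜 f)) h1
  have := hkey.trans ((𝓜.le_opNorm f))
  exact le_of_mul_le_mul_right (by linarith) hfpos

end Aux

/-- For a multiplication operator `𝓜` on `L^p(Ω,X)` induced by a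
pointwise family `M : Ω → L(X)`, `𝓜` is bounded (i.e. extends to a bounded operator on
all of `L^p`) iff `s ↦ ‖M s‖` is essentially bounded, and in that case
`‖𝓜‖ = ess sup ‖M(s)‖`. -/
theorem stmt0 {Ω X : Type*} [MeasurableSpace Ω] [NormedAddCommGroup X]
    [NormedSpace ℂ X] [CompleteSpace X] [TopologicalSpace.SeparableSpace X]
    (μ : Measure Ω) [SigmaFinite μ]
    (hfsp : ∀ Y : Set Ω, MeasurableSet Y → 0 < μ Y →
      ∃ Z : Set Ω, MeasurableSet Z ∧ Z ⊆ Y ∧ 0 < μ Z ∧ μ Z < ⊤)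
    (p : ℝ≥0∞) [Fact (1 ≤ p)]
    (M : Ω → X →L[ℂ] X)
    (hM : ∀ x : X, StronglyMeasurable fun s => M s x) :
    ((∃ 𝓜 : Lp X p μ →L[ℂ] Lp X p μ,
        ∀ f : Lp X p μ, ∀ᵐ s ∂μ, (𝓜 f : Ω →ₘ[μ] X) s = M s ((f : Ω →ₘ[μ] X) s)) ↔
      ∃ C : ℝ, 0 ≤ C ∧ ∀ᵐ s ∂μ, ‖M s‖ ≤ C) ∧
    (∀ 𝓜 : Lp X p μ →L[ℂ] Lp X p μ,
      (∀ f : Lp X p μ, ∀ᵐ s ∂μ, (𝓜 f : Ω →ₘ[μ] X) s = M s ((f : Ω →ₘ[μ] X) s)) →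
      ‖𝓜‖ = sInf {C : ℝ | 0 ≤ C ∧ μ {s | C < ‖M s‖} = 0}) := by
  have key : ∀ 𝓜 : Lp X p μ →L[ℂ] Lp X p μ,
      (∀ f : Lp X p μ, ∀ᵐ s ∂μ, (𝓜 f : Ω →ₘ[μ] X) s = M s ((f : Ω →ₘ[μ] X) s)) →
      μ {s | ‖𝓜‖ < ‖M s‖} = 0 := by
    intro 𝓜 h𝓜
    have hnull : ∀ n : ℕ, μ {s | ‖𝓜‖ + 1 / (n + 1) < ‖M s‖} = 0 := by
      intro n
      by_contra hne
      have hpos : 0 < μ {s | ‖𝓜‖ + 1 / (n + 1) < ‖M s‖} := pos_iff_ne_zero.2 hne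
      have h1 : (0 : ℝ) < 1 / (n + 1) := by positivity
      have := aux_lower μ hfsp M hM 𝓜 h𝓜
        (by have := norm_nonneg 𝓜; linarith) hpos
      linarith
    have hsub : {s | ‖𝓜‖ < ‖M s‖} ⊆ ⋃ n : ℕ, {s | ‖𝓜‖ + 1 / (n + 1) < ‖M s‖} := by
      intro s hs
      rw [Set.mem_setOf_eq] at hs
      obtain ⟨n, hn⟩ := exists_nat_one_div_lt (sub_pos.2 hs)
      refine Set.mem_iUnion.2 ⟨n, ?_⟩
      rw [Set.mem_setOf_eq]
      push_cast at hn ⊢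
      linarith
    exact le_antisymm ((measure_mono hsub).trans (measure_iUnion_null hnull).le) (zero_le ..)
  constructor
  · constructor
    · rintro ⟨𝓜, h𝓜⟩
      refine ⟨‖𝓜‖, norm_nonneg _, ?_⟩
      rw [ae_iff]
      simpa [not_le] using key 𝓜 h𝓜
    · rintro ⟨C, hC0, hC⟩
      exact aux_exists μ M hM hC0 hC
  · intro 𝓜 h𝓜
    refine le_antisymm (le_csInf ⟨‖𝓜‖, norm_nonneg _, key 𝓜 h𝓜⟩ ?_)
      (csInf_le ⟨0, fun C hC => hC.1⟩ ⟨norm_nonneg _, key 𝓜 h𝓜⟩)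
    rintro C ⟨hC0, hCnull⟩
    refine aux_upper μ M 𝓜 h𝓜 hC0 ?_
    rw [ae_iff]
    simpa [not_le] using hCnull
end

section
/- Let M: Ω → L(X) induce a multiplication operator 𝓜 on L^p(Ω,X), where (Ω,Σ,μ) is σ-finite with the finite subset property and X is separable. If there exist K ≥ 0 and a measurable set N ⊆ Ω with μ(N) > 0 such that ‖M(s)‖ > K for all s ∈ N, then ‖𝓜‖ > K. -/
open MeasureTheory Filter Topology ENNReal

/-- If `𝓜` is a bounded multiplication operator on `L^p(Ω,X)` induced by
`M : Ω → L(X)` and `‖M s‖ > K` on a set `N` of positive measure, then `‖𝓜‖ > K`. -/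
theorem stmt1 {Ω X : Type*} [MeasurableSpace Ω] [NormedAddCommGroup X]
    [NormedSpace ℂ X] [CompleteSpace X] [TopologicalSpace.SeparableSpace X]
    (μ : Measure Ω) [SigmaFinite μ]
    (hfsp : ∀ Y : Set Ω, MeasurableSet Y → 0 < μ Y →
      ∃ Z : Set Ω, MeasurableSet Z ∧ Z ⊆ Y ∧ 0 < μ Z ∧ μ Z < ⊤)
    (p : ℝ≥0∞) [Fact (1 ≤ p)] (hp : p ≠ ⊤)
    (M : Ω → X →L[ℂ] X)
    (hM : ∀ x : X, StronglyMeasurable fun s => M s x)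
    (𝓜 : Lp X p μ →L[ℂ] Lp X p μ)
    (h𝓜 : ∀ f : Lp X p μ, ∀ᵐ s ∂μ, (𝓜 f : Ω →ₘ[μ] X) s = M s ((f : Ω →ₘ[μ] X) s))
    (K : ℝ) (hK : 0 ≤ K) (N : Set Ω) (hNmeas : MeasurableSet N) (hNpos : 0 < μ N)
    (hKN : ∀ s ∈ N, K < ‖M s‖) :
    K < ‖𝓜‖ := by
  have hp0 : p ≠ 0 := (one_pos.trans_le Fact.out).ne'
  have hpR : 0 < p.toReal := ENNReal.toReal_pos hp0 hp
  have hne : Nonempty X := ⟨0⟩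
  set u : ℕ → X := TopologicalSpace.denseSeq X with hu
  have hdense : DenseRange u := TopologicalSpace.denseRange_denseSeq X
  set A : ℕ × ℕ → Set Ω := fun nm =>
    {s | (K + 1 / (nm.2 + 1)) * ‖u nm.1‖ < ‖M s (u nm.1)‖} with hA
  have hAmeas : ∀ nm, MeasurableSet (A nm) := fun nm =>
    measurableSet_lt measurable_const (hM (u nm.1)).norm.measurable
  have hNsub : N ⊆ ⋃ nm, A nm := by
    intro s hs
    have h1 : K < ‖M s‖ := hKN s hs
    obtain ⟨x, hx⟩ : ∃ x : X, K * ‖x‖ < ‖M s x‖ := by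
      by_contra h
      push_neg at h
      exact absurd ((M s).opNorm_le_bound hK fun y => h y) (not_le.mpr h1)
    have hUopen : IsOpen {y : X | K * ‖y‖ < ‖M s y‖} :=
      isOpen_lt (by fun_prop) (by fun_prop)
    obtain ⟨n, hn⟩ := hdense.exists_mem_open hUopen ⟨x, hx⟩
    have hn' : K * ‖u n‖ < ‖M s (u n)‖ := hn
    have hun : 0 < ‖u n‖ := by
      rcases eq_or_ne (u n) 0 with h0 | h0
      · rw [h0] at hn'; simp at hn'
      · exact norm_pos_iff.mpr h0
    obtain ⟨m, hm⟩ := exists_nat_one_div_lt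
      (show 0 < (‖M s (u n)‖ - K * ‖u n‖) / ‖u n‖ from div_pos (by linarith) hun)
    refine Set.mem_iUnion.mpr ⟨(n, m), ?_⟩
    have hm' : 1 / (m + 1 : ℝ) * ‖u n‖ < ‖M s (u n)‖ - K * ‖u n‖ :=
      (lt_div_iff₀ hun).mp hm
    simp only [hA, Set.mem_setOf_eq]
    nlinarith [hm', hun]
  obtain ⟨nm, hnm⟩ : ∃ nm, 0 < μ (N ∩ A nm) := by
    by_contra h
    push_neg at h
    have hz : μ N = 0 := by
      have h2 : N ⊆ ⋃ nm, (N ∩ A nm) := fun s hs => by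
        obtain ⟨t, ht⟩ := Set.mem_iUnion.mp (hNsub hs)
        exact Set.mem_iUnion.mpr ⟨t, hs, ht⟩
      exact measure_mono_null h2 (measure_iUnion_null fun nm => le_zero_iff.mp (h nm))
    exact hNpos.ne' hz
  obtain ⟨Z, hZmeas, hZsub, hZpos, hZtop⟩ :=
    hfsp (N ∩ A nm) (hNmeas.inter (hAmeas nm)) hnm
  set x : X := u nm.1 with hx
  set c : ℝ := K + 1 / (nm.2 + 1) with hc
  have hKc : K < c := by
    have h0 : (0:ℝ) < 1 / (nm.2 + 1) := by positivity
    rw [hc]; linarith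
  have hc0 : 0 ≤ c := hK.trans hKc.le
  have hZA : ∀ s ∈ Z, c * ‖x‖ < ‖M s x‖ := fun s hs => (hZsub hs).2
  have hxpos : 0 < ‖x‖ := by
    obtain ⟨s, hs⟩ := nonempty_of_measure_ne_zero hZpos.ne'
    rcases eq_or_ne x 0 with h0 | h0
    · have := hZA s hs; rw [h0] at this; simp at this
    · exact norm_pos_iff.mpr h0
  set f : Lp X p μ := indicatorConstLp p hZmeas hZtop.ne x with hf
  have hnormf : ‖f‖ = ‖x‖ * (μ Z).toReal ^ (1 / p.toReal) :=
    norm_indicatorConstLp hp0 hp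
  have hfpos : 0 < ‖f‖ := by
    rw [hnormf]
    have : 0 < (μ Z).toReal := ENNReal.toReal_pos hZpos.ne' hZtop.ne
    positivity
  have hae : ∀ᵐ s ∂μ, ‖(((c:ℂ) • f : Lp X p μ) : Ω → X) s‖ ≤ ‖((𝓜 f : Lp X p μ) : Ω → X) s‖ := by
    filter_upwards [h𝓜 f, indicatorConstLp_coeFn (μ := μ) (p := p) (hs := hZmeas)
      (hμs := hZtop.ne) (c := x), Lp.coeFn_smul (c:ℂ) f] with s h1 h2 h3
    rw [h3, Pi.smul_apply, h1, h2, norm_smul]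
    by_cases hsZ : s ∈ Z
    · rw [Set.indicator_of_mem hsZ]
      have := (hZA s hsZ).le
      have hcn : ‖(c:ℂ)‖ = c := by
        rw [Complex.norm_real, Real.norm_eq_abs, abs_of_nonneg hc0]
      rw [hcn]; exact this
    · rw [Set.indicator_of_notMem hsZ]
      simp
  have h1 : ‖(c:ℂ) • f‖ ≤ ‖𝓜 f‖ := by
    rw [Lp.norm_def, Lp.norm_def]
    exact ENNReal.toReal_mono (Lp.eLpNorm_ne_top _) (eLpNorm_mono_ae hae)
  have h2 : ‖(c:ℂ) • f‖ = c * ‖f‖ := by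
    rw [norm_smul, Complex.norm_real, Real.norm_eq_abs, abs_of_nonneg hc0]
  have h3 : ‖𝓜 f‖ ≤ ‖𝓜‖ * ‖f‖ := 𝓜.le_opNorm f
  have h4 : c * ‖f‖ ≤ ‖𝓜‖ * ‖f‖ := by rw [← h2]; exact h1.trans h3
  exact hKc.trans_le (le_of_mul_le_mul_right h4 hfpos)
end

section
/- Let 𝓐 generate a C₀-semigroup of multiplication operators (e^{t𝓐})_{t≥0} on L^p(Ω,X), 1 ≤ p < ∞, with ‖e^{t𝓐}‖ ≤ M for all t ≥ 0. If the pointwise semigroups (e^{tA(s)})_{t≥0} are strongly stable for almost all s ∈ Ω (i.e., ‖e^{tA(s)}x‖ → 0 for every x ∈ X), then the multiplication semigroup (e^{t𝓐})_{t≥0} is strongly stable on L^p(Ω,X). -/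
open MeasureTheory Filter Topology ENNReal

/-- If a uniformly bounded multiplication semigroup `(e^{t𝓐})` on
`L^p(Ω,X)` (`1 ≤ p < ∞`) has pointwise semigroups that are strongly stable for almost
all `s`, then the multiplication semigroup is strongly stable. -/
theorem stmt5 {Ω X : Type*} [MeasurableSpace Ω] [NormedAddCommGroup X]
    [NormedSpace ℂ X] [CompleteSpace X] [TopologicalSpace.SeparableSpace X]
    (μ : Measure Ω) [SigmaFinite μ]
    (hfsp : ∀ Y : Set Ω, MeasurableSet Y → 0 < μ Y →
      ∃ Z : Set Ω, MeasurableSet Z ∧ Z ⊆ Y ∧ 0 < μ Z ∧ μ Z < ⊤)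
    (p : ℝ≥0∞) [Fact (1 ≤ p)] (hp : p ≠ ⊤)
    (T : ℝ → Lp X p μ →L[ℂ] Lp X p μ)
    (hT0 : T 0 = 1)
    (hTadd : ∀ t r : ℝ, 0 ≤ t → 0 ≤ r → T (t + r) = (T t).comp (T r))
    (hTcont : ∀ f : Lp X p μ, ContinuousOn (fun t => T t f) (Set.Ici 0))
    (M : ℝ) (hM : 0 < M) (hbound : ∀ t : ℝ, 0 ≤ t → ‖T t‖ ≤ M)
    (A : ℝ → Ω → X →L[ℂ] X)
    (hpt : ∀ t : ℝ, 0 ≤ t → ∀ f : Lp X p μ,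
      ∀ᵐ s ∂μ, (T t f : Ω →ₘ[μ] X) s = A t s ((f : Ω →ₘ[μ] X) s))
    (hstab : ∀ᵐ s ∂μ, ∀ x : X, Tendsto (fun t : ℝ => ‖A t s x‖) atTop (𝓝 0)) :
    ∀ f : Lp X p μ, Tendsto (fun t : ℝ => ‖T t f‖) atTop (𝓝 0) := by
  have hp0 : p ≠ 0 := (lt_of_lt_of_le zero_lt_one (Fact.out : 1 ≤ p)).ne'
  have hpR : 0 < p.toReal := ENNReal.toReal_pos hp0 hp
  have hpt' : ∀ t : ℝ, 0 ≤ t → ∀ f : Lp X p μ,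
      ∀ᵐ s ∂μ, (T t f) s = A t s (f s) := hpt
  -- Step 1: pointwise bound for each fixed x
  have keyx : ∀ t : ℝ, 0 ≤ t → ∀ x : X, ∀ᵐ s ∂μ, ‖A t s x‖ ≤ M * ‖x‖ := by
    intro t ht x
    rcases eq_or_ne x 0 with rfl | hx
    · filter_upwards with s; simp
    have hxpos : 0 < ‖x‖ := norm_pos_iff.mpr hx
    have main : ∀ n : ℕ, ∀ᵐ s ∂μ, s ∈ spanningSets μ n → ‖A t s x‖ ≤ M * ‖x‖ := by
      intro n
      set E := spanningSets μ n with hEdef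
      have hE : MeasurableSet E := measurableSet_spanningSets μ n
      have hEfin : μ E ≠ ∞ := (measure_spanningSets_lt_top μ n).ne
      set f : Lp X p μ := indicatorConstLp p hE hEfin x with hfdef
      have hptf := hpt' t ht f
      obtain ⟨g, hgsm, hgeq⟩ : ∃ g : Ω → X, StronglyMeasurable g ∧ ⇑(T t f) =ᵐ[μ] g :=
        ⟨(Lp.aestronglyMeasurable (T t f)).mk _,
          (Lp.aestronglyMeasurable (T t f)).stronglyMeasurable_mk,
          (Lp.aestronglyMeasurable (T t f)).ae_eq_mk⟩
      have hnull : ∀ ε : ℝ, 0 < ε → μ (E ∩ {s | (M + ε) * ‖x‖ ≤ ‖g s‖}) = 0 := by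
        intro ε hε
        set c : ℝ := (M + ε) * ‖x‖ with hcdef
        have hc : 0 < c := by positivity
        set B : Set Ω := E ∩ {s | c ≤ ‖g s‖} with hBdef
        have hBmeas : MeasurableSet B :=
          hE.inter (measurableSet_le measurable_const hgsm.norm.measurable)
        have hBfin : μ B ≠ ∞ :=
          ((measure_mono Set.inter_subset_left).trans_lt
            (measure_spanningSets_lt_top μ n)).ne
        by_contra hB0
        have hBpos : 0 < μ B := pos_iff_ne_zero.mpr hB0
        set f' : Lp X p μ := indicatorConstLp p hBmeas hBfin x with hf'def
        have upper : ‖T t f'‖ ≤ M * ‖f'‖ :=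
          le_trans ((T t).le_opNorm f')
            (mul_le_mul_of_nonneg_right (hbound t ht) (norm_nonneg f'))
        have hnf' : ‖f'‖ = ‖x‖ * (μ B).toReal ^ (1 / p.toReal) :=
          norm_indicatorConstLp hp0 hp
        have hae : ∀ᵐ s ∂μ, s ∈ B → c ≤ ‖(T t f') s‖ := by
          filter_upwards [hpt' t ht f', indicatorConstLp_coeFn (μ := μ) (p := p)
              (hs := hBmeas) (hμs := hBfin) (c := x),
            hptf, indicatorConstLp_coeFn (μ := μ) (p := p)
              (hs := hE) (hμs := hEfin) (c := x), hgeq] with s h1 h2 h3 h4 h5 hsB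
          have hfx : (f : Lp X p μ) s = x := by
            rw [h4, Set.indicator_of_mem hsB.1]
          have hf'x : (f' : Lp X p μ) s = x := by
            rw [h2, Set.indicator_of_mem hsB]
          have : (T t f') s = g s := by
            rw [h1, hf'x, ← hfx, ← h3, h5]
          rw [this]; exact hsB.2
        have h6 : ENNReal.ofReal c * μ B ^ (1 / p.toReal) ≤ eLpNorm (⇑(T t f')) p μ := by
          rw [eLpNorm_eq_lintegral_rpow_enorm_toReal hp0 hp]
          have hstep : ENNReal.ofReal c ^ p.toReal * μ B ≤
              ∫⁻ s, (‖(T t f') s‖₊ : ℝ≥0∞) ^ p.toReal ∂μ := by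
            rw [← setLIntegral_const B (ENNReal.ofReal c ^ p.toReal)]
            refine le_trans (setLIntegral_mono_ae'
              hBmeas ?_) (setLIntegral_le_lintegral B _)
            filter_upwards [hae] with s hs hsB
            have h7 : ENNReal.ofReal c ≤ (‖(T t f') s‖₊ : ℝ≥0∞) := by
              rw [← enorm_eq_nnnorm, ← ofReal_norm]
              exact ENNReal.ofReal_le_ofReal (hs hsB)
            exact ENNReal.rpow_le_rpow h7 hpR.le
          calc ENNReal.ofReal c * μ B ^ (1 / p.toReal)
              = (ENNReal.ofReal c ^ p.toReal * μ B) ^ (1 / p.toReal) := by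
                rw [ENNReal.mul_rpow_of_nonneg _ _ (by positivity : (0:ℝ) ≤ 1 / p.toReal),
                  ← ENNReal.rpow_mul, mul_one_div, div_self hpR.ne', ENNReal.rpow_one]
            _ ≤ _ := ENNReal.rpow_le_rpow hstep (by positivity)
        have h7 : c * (μ B).toReal ^ (1 / p.toReal) ≤ ‖T t f'‖ := by
          rw [Lp.norm_def]
          have h8 := ENNReal.toReal_mono (Lp.eLpNorm_ne_top (T t f')) h6
          rwa [ENNReal.toReal_mul, ENNReal.toReal_ofReal hc.le,
            ← ENNReal.toReal_rpow] at h8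
        have hr : 0 < (μ B).toReal ^ (1 / p.toReal) :=
          Real.rpow_pos_of_pos (ENNReal.toReal_pos hB0 hBfin) _
        rw [hnf'] at upper
        have h10 := h7.trans upper
        rw [hcdef] at h10
        nlinarith [h10, mul_pos (mul_pos hε hxpos) hr]
      have hU : μ (⋃ k : ℕ, E ∩ {s | (M + 1 / (k + 1)) * ‖x‖ ≤ ‖g s‖}) = 0 :=
        measure_iUnion_null fun k => hnull _ (by positivity)
      have hcompl := measure_eq_zero_iff_ae_notMem.mp hU
      filter_upwards [hcompl, hgeq, hptf,
        indicatorConstLp_coeFn (μ := μ) (p := p) (hs := hE) (hμs := hEfin) (c := x)]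
        with s hs hg2 h3 h4 hsE
      have hfx : (f : Lp X p μ) s = x := by rw [h4, Set.indicator_of_mem hsE]
      have hAg : ‖A t s x‖ = ‖g s‖ := by rw [← hfx, ← h3, hg2]
      rw [hAg]
      by_contra hlt
      push_neg at hlt
      obtain ⟨k, hk⟩ := exists_nat_one_div_lt
        (div_pos (show (0:ℝ) < ‖g s‖ - M * ‖x‖ by linarith) hxpos)
      exact hs (Set.mem_iUnion.mpr ⟨k, hsE, by
        simp only [Set.mem_setOf_eq]
        have h9 : (1 : ℝ) / (k + 1) * ‖x‖ ≤ (‖g s‖ - M * ‖x‖) / ‖x‖ * ‖x‖ :=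
          mul_le_mul_of_nonneg_right hk.le (norm_nonneg x)
        rw [div_mul_cancel₀ _ hxpos.ne'] at h9
        push_cast
        nlinarith⟩)
    rw [← ae_all_iff] at main
    filter_upwards [main] with s hs
    obtain ⟨n, hn⟩ : ∃ n, s ∈ spanningSets μ n := by
      have := iUnion_spanningSets μ
      rw [Set.iUnion_eq_univ_iff] at this
      exact this s
    exact hs n hn
  -- Step 2: pointwise bound for all x simultaneously
  have key : ∀ t : ℝ, 0 ≤ t → ∀ᵐ s ∂μ, ∀ x : X, ‖A t s x‖ ≤ M * ‖x‖ := by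
    intro t ht
    obtain ⟨D, hDc, hDd⟩ := TopologicalSpace.exists_countable_dense X
    have := (ae_ball_iff hDc).mpr (fun x _ => keyx t ht x)
    filter_upwards [this] with s hs x
    have hclosed : IsClosed {y : X | ‖A t s y‖ ≤ M * ‖y‖} :=
      isClosed_le ((A t s).continuous.norm) (continuous_const.mul continuous_norm)
    have hsub : D ⊆ {y : X | ‖A t s y‖ ≤ M * ‖y‖} := fun y hy => hs y hy
    exact hclosed.closure_subset_iff.mpr hsub (hDd x)
  -- Main argument
  intro f
  rw [tendsto_iff_seq_tendsto]
  intro u hu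
  have hnn : ∀ᶠ n in atTop, 0 ≤ u n := hu.eventually_ge_atTop 0
  set v : ℕ → ℝ := fun n => max (u n) 0 with hvdef
  have hv0 : ∀ n, 0 ≤ v n := fun n => le_max_right _ _
  have hveq : (fun n => ‖T (u n) f‖) =ᶠ[atTop] fun n => ‖T (v n) f‖ :=
    hnn.mono fun n hn => by simp [hvdef, max_eq_left hn]
  suffices hgoal : Tendsto (fun n => ‖T (v n) f‖) atTop (𝓝 0) by
    exact Tendsto.congr' hveq.symm hgoal
  have hv : Tendsto v atTop atTop := tendsto_atTop_mono (fun n => le_max_left _ _) hu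
  have hmeas : ∀ n, AEMeasurable (fun s => (‖(T (v n) f) s‖₊ : ℝ≥0∞) ^ p.toReal) μ :=
    fun n => ENNReal.continuous_rpow_const.measurable.comp_aemeasurable
      (AEStronglyMeasurable.enorm (Lp.aestronglyMeasurable (T (v n) f)))
  have hdom : ∀ n, (fun s => (‖(T (v n) f) s‖₊ : ℝ≥0∞) ^ p.toReal) ≤ᵐ[μ]
      fun s => ENNReal.ofReal M ^ p.toReal * (‖f s‖₊ : ℝ≥0∞) ^ p.toReal := by
    intro n
    filter_upwards [hpt' (v n) (hv0 n) f, key (v n) (hv0 n)] with s h1 h2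
    have h3 : ‖(T (v n) f) s‖ ≤ M * ‖f s‖ := by rw [h1]; exact h2 _
    rw [← ENNReal.mul_rpow_of_nonneg _ _ hpR.le]
    refine ENNReal.rpow_le_rpow ?_ hpR.le
    rw [← enorm_eq_nnnorm, ← enorm_eq_nnnorm, ← ofReal_norm, ← ofReal_norm,
      ← ENNReal.ofReal_mul hM.le]
    exact ENNReal.ofReal_le_ofReal h3
  have hint : ∫⁻ s, ENNReal.ofReal M ^ p.toReal * (‖f s‖₊ : ℝ≥0∞) ^ p.toReal ∂μ ≠ ∞ := by
    rw [lintegral_const_mul' _ _ (ENNReal.rpow_ne_top_of_nonneg hpR.le ENNReal.ofReal_ne_top)]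
    exact ENNReal.mul_ne_top (ENNReal.rpow_ne_top_of_nonneg hpR.le ENNReal.ofReal_ne_top)
      (lintegral_rpow_enorm_lt_top_of_eLpNorm_lt_top hp0 hp (Lp.memLp f).2).ne
  have hlim : ∀ᵐ s ∂μ, Tendsto (fun n => (‖(T (v n) f) s‖₊ : ℝ≥0∞) ^ p.toReal)
      atTop (𝓝 0) := by
    have hall : ∀ᵐ s ∂μ, ∀ n, (T (v n) f) s = A (v n) s (f s) :=
      ae_all_iff.mpr fun n => hpt' (v n) (hv0 n) f
    filter_upwards [hall, hstab] with s h1 h2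
    have h3 : Tendsto (fun n => ‖(T (v n) f) s‖) atTop (𝓝 0) := by
      have heq : (fun n => ‖(T (v n) f) s‖) = fun n => ‖A (v n) s (f s)‖ :=
        funext fun n => by rw [h1 n]
      rw [heq]
      exact (h2 (f s)).comp hv
    have h4 : Tendsto (fun n => (‖(T (v n) f) s‖₊ : ℝ≥0∞)) atTop (𝓝 0) := by
      simp_rw [← enorm_eq_nnnorm, ← ofReal_norm]
      have := (ENNReal.continuous_ofReal.tendsto 0).comp h3
      simpa [Function.comp_def] using this
    have := ((ENNReal.continuous_rpow_const (y := p.toReal)).tendsto 0).comp h4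
    simpa [ENNReal.zero_rpow_of_pos hpR, Function.comp_def] using this
  have hDCT : Tendsto (fun n => ∫⁻ s, (‖(T (v n) f) s‖₊ : ℝ≥0∞) ^ p.toReal ∂μ)
      atTop (𝓝 0) := by
    have := tendsto_lintegral_of_dominated_convergence' _ hmeas hdom hint
      (by filter_upwards [hlim] with s hs; exact hs)
    simpa using this
  have hfin : Tendsto (fun n => ((∫⁻ s, (‖(T (v n) f) s‖₊ : ℝ≥0∞) ^ p.toReal ∂μ)
      ^ (1 / p.toReal)).toReal) atTop (𝓝 0) := by
    have h5 := ((ENNReal.continuous_rpow_const (y := 1 / p.toReal)).tendsto 0).comp hDCT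
    rw [ENNReal.zero_rpow_of_pos (by positivity)] at h5
    have h6 := (ENNReal.tendsto_toReal (by simp : (0:ℝ≥0∞) ≠ ∞)).comp h5
    simpa [Function.comp_def] using h6
  refine hfin.congr fun n => ?_
  rw [Lp.norm_def, eLpNorm_eq_lintegral_rpow_enorm_toReal hp0 hp]
  rfl
end

section
/- Let (Ω,Σ,μ) be σ-finite with the finite subset property, X separable, and (e^{t𝓐})_{t≥0} a multiplication semigroup on L^p(Ω,X) with pointwise semigroups (e^{tA(s)})_{t≥0}. Then for M > 0: ‖e^{t𝓐}‖ ≤ M for all t ≥ 0 if and only if there is a null set N such that ‖e^{tA(s)}‖ ≤ M for all s ∈ Ω∖N and all t ≥ 0. -/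
open MeasureTheory Filter Topology ENNReal


lemma stmt18_aux {Ω X : Type*} [MeasurableSpace Ω] [NormedAddCommGroup X]
    [NormedSpace ℂ X] (μ : Measure Ω) [SigmaFinite μ]
    (p : ℝ≥0∞) [Fact (1 ≤ p)]
    (S : Lp X p μ →L[ℂ] Lp X p μ) (B : Ω → X →L[ℂ] X)
    (hpt : ∀ f : Lp X p μ, ∀ᵐ s ∂μ, (S f : Ω →ₘ[μ] X) s = B s ((f : Ω →ₘ[μ] X) s))
    (M : ℝ) (hM : 0 ≤ M) (hS : ∀ f, ‖S f‖ ≤ M * ‖f‖) (x : X) :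
    ∀ᵐ s ∂μ, ‖B s x‖ ≤ M * ‖x‖ := by
  have hp0 : p ≠ 0 := (lt_of_lt_of_le zero_lt_one (Fact.out : 1 ≤ p)).ne'
  rcases eq_or_ne x 0 with rfl | hx
  · filter_upwards with s; simp
  have hx' : 0 < ‖x‖ := norm_pos_iff.mpr hx
  -- layer claim
  have key : ∀ E : Set Ω, MeasurableSet E → μ E < ∞ → ∀ ε : ℝ, 0 < ε →
      ∀ᵐ s ∂μ.restrict E, ‖B s x‖ ≤ (M + ε) * ‖x‖ := by
    intro E hE hμE ε hε
    set f : Lp X p μ := indicatorConstLp p hE hμE.ne x with hf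
    have hcoe : ⇑(f : Ω →ₘ[μ] X) =ᵐ[μ] E.indicator fun _ => x := indicatorConstLp_coeFn
    have main := hpt f
    have hg := Lp.aestronglyMeasurable (S f)
    set g' : Ω → X := hg.mk _ with hg'
    have hgg' : ⇑((S f : Lp X p μ) : Ω →ₘ[μ] X) =ᵐ[μ] g' := hg.ae_eq_mk
    set W : Set Ω := {s | (M + ε) * ‖x‖ < ‖g' s‖} ∩ E with hW
    have hWmeas : MeasurableSet W :=
      (measurableSet_lt measurable_const hg.stronglyMeasurable_mk.norm.measurable).inter hE
    have hWE : μ W ≤ μ E := measure_mono Set.inter_subset_right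
    -- a.e. on E : B s x = g' s
    have hBE : ∀ᵐ s ∂μ.restrict E, B s x = g' s := by
      have h1 : ∀ᵐ s ∂μ.restrict E, ⇑(f : Ω →ₘ[μ] X) s = x := by
        filter_upwards [ae_restrict_of_ae hcoe, ae_restrict_mem hE] with s h1 h2
        rw [h1, Set.indicator_of_mem h2]
      filter_upwards [ae_restrict_of_ae main, ae_restrict_of_ae hgg', h1] with s h1 h2 h3
      rw [← h3, ← h1, h2]
    by_cases hWz : μ W = 0
    · have hWz' : ∀ᵐ s ∂μ.restrict E, s ∉ W :=
        ae_restrict_of_ae ((measure_eq_zero_iff_ae_notMem).mp hWz)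
      filter_upwards [hBE, hWz', ae_restrict_mem hE] with s h1 h2 h3
      rw [h1]
      by_contra hcon
      exact h2 ⟨lt_of_not_ge hcon, h3⟩
    · exfalso
      have hμW : μ W < ∞ := hWE.trans_lt hμE
      set f' : Lp X p μ := indicatorConstLp p hWmeas hμW.ne x with hf'
      have hcoe' : ⇑(f' : Ω →ₘ[μ] X) =ᵐ[μ] W.indicator fun _ => x := indicatorConstLp_coeFn
      have main' := hpt f'
      -- a.e. on W : (M+ε)‖x‖ ≤ ‖(S f') s‖
      have hlow : ∀ᵐ s ∂μ.restrict W,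
          (M + ε) * ‖x‖ ≤ ‖⇑((S f' : Lp X p μ) : Ω →ₘ[μ] X) s‖ := by
        have hBW : ∀ᵐ s ∂μ.restrict W, B s x = g' s :=
          ae_restrict_of_ae_restrict_of_subset Set.inter_subset_right hBE
        have h1 : ∀ᵐ s ∂μ.restrict W, ⇑(f' : Ω →ₘ[μ] X) s = x := by
          filter_upwards [ae_restrict_of_ae hcoe', ae_restrict_mem hWmeas] with s h1 h2
          rw [h1, Set.indicator_of_mem h2]
        filter_upwards [ae_restrict_of_ae main', h1, hBW, ae_restrict_mem hWmeas]
          with s h1 h2 h3 h4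
        rw [h1, h2, h3]
        exact (h4.1 : _).le
      -- norm inequalities
      set d : ℝ≥0∞ := μ W ^ (1 / p.toReal) with hd
      have hd0 : d ≠ 0 := (ENNReal.rpow_pos (pos_iff_ne_zero.mpr hWz) hμW.ne).ne'
      have hdt : d ≠ ∞ := ENNReal.rpow_ne_top_of_nonneg (by positivity) hμW.ne
      have hfnorm : eLpNorm (⇑((f' : Lp X p μ) : Ω →ₘ[μ] X)) p μ = ‖x‖₊ * d := by
        rw [eLpNorm_congr_ae hcoe', eLpNorm_indicator_const' hWmeas hWz hp0]
        rfl
      have hlower : ENNReal.ofReal ((M + ε) * ‖x‖) * d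
          ≤ eLpNorm (⇑((S f' : Lp X p μ) : Ω →ₘ[μ] X)) p μ := by
        have h1 : eLpNorm (fun _ => (M + ε) * ‖x‖ : Ω → ℝ) p (μ.restrict W)
            ≤ eLpNorm (⇑((S f' : Lp X p μ) : Ω →ₘ[μ] X)) p (μ.restrict W) := by
          apply eLpNorm_mono_ae
          filter_upwards [hlow] with s hs
          rwa [Real.norm_of_nonneg (by positivity)]
        have h2 : eLpNorm (fun _ => (M + ε) * ‖x‖ : Ω → ℝ) p (μ.restrict W)
            = ENNReal.ofReal ((M + ε) * ‖x‖) * d := by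
          rw [eLpNorm_const _ hp0 (by simpa [Measure.restrict_eq_zero] using hWz),
            Measure.restrict_apply_univ]
          congr 1
          rw [← ofReal_norm, Real.norm_of_nonneg
            (show (0:ℝ) ≤ (M + ε) * ‖x‖ by positivity)]
        calc ENNReal.ofReal ((M + ε) * ‖x‖) * d = _ := h2.symm
          _ ≤ _ := h1
          _ ≤ _ := eLpNorm_mono_measure _ Measure.restrict_le_self
      have hupper : eLpNorm (⇑((S f' : Lp X p μ) : Ω →ₘ[μ] X)) p μ
          ≤ ENNReal.ofReal M * (‖x‖₊ * d) := by
        rw [← hfnorm, ← Lp.enorm_def, ← Lp.enorm_def]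
        calc (‖S f'‖₊ : ℝ≥0∞) = ENNReal.ofReal ‖S f'‖ :=
              (ofReal_norm _).symm
          _ ≤ ENNReal.ofReal (M * ‖f'‖) := ENNReal.ofReal_le_ofReal (hS f')
          _ = ENNReal.ofReal M * ENNReal.ofReal ‖f'‖ :=
              ENNReal.ofReal_mul hM
          _ = ENNReal.ofReal M * ‖f'‖₊ := by
              rw [ofReal_norm]; rfl
      have hfinal : ENNReal.ofReal ((M + ε) * ‖x‖) * d ≤ (ENNReal.ofReal M * ‖x‖₊) * d := by
        calc ENNReal.ofReal ((M + ε) * ‖x‖) * d ≤ _ := hlower.trans hupper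
          _ = _ := by ring
      rw [ENNReal.mul_le_mul_iff_left hd0 hdt] at hfinal
      have : ENNReal.ofReal ((M + ε) * ‖x‖) ≤ ENNReal.ofReal (M * ‖x‖) := by
        calc ENNReal.ofReal ((M + ε) * ‖x‖) ≤ ENNReal.ofReal M * ‖x‖₊ := hfinal
          _ = ENNReal.ofReal M * ENNReal.ofReal ‖x‖ := by
              rw [ofReal_norm]; rfl
          _ = ENNReal.ofReal (M * ‖x‖) := (ENNReal.ofReal_mul hM).symm
      rw [ENNReal.ofReal_le_ofReal_iff (by positivity)] at this
      nlinarith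
  -- combine layers and spanning sets
  apply ae_of_forall_measure_lt_top_ae_restrict
  intro E hE hμE
  have hall : ∀ᵐ s ∂μ.restrict E, ∀ n : ℕ, ‖B s x‖ ≤ (M + 1 / (n + 1)) * ‖x‖ :=
    ae_all_iff.mpr fun n => key E hE hμE _ (by positivity)
  filter_upwards [hall] with s hs
  have h0 : Tendsto (fun n : ℕ => M + 1 / (n + 1 : ℝ)) atTop (𝓝 (M + 0)) :=
    tendsto_const_nhds.add tendsto_one_div_add_atTop_nhds_zero_nat
  have htend : Tendsto (fun n : ℕ => (M + 1 / (n + 1 : ℝ)) * ‖x‖) atTop (𝓝 (M * ‖x‖)) := by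
    simpa using h0.mul_const ‖x‖
  exact ge_of_tendsto' htend hs

/-- For a multiplication semigroup on `L^p(Ω,X)` with pointwise
semigroups `(e^{tA(s)})` depending continuously on `t`, and `M > 0`:
`‖e^{t𝓐}‖ ≤ M` for all `t ≥ 0` iff there is a single null set `N` with
`‖e^{tA(s)}‖ ≤ M` for all `s ∉ N` and all `t ≥ 0`. -/
theorem stmt18 {Ω X : Type*} [MeasurableSpace Ω] [NormedAddCommGroup X]
    [NormedSpace ℂ X] [CompleteSpace X] [TopologicalSpace.SeparableSpace X]
    (μ : Measure Ω) [SigmaFinite μ]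
    (hfsp : ∀ Y : Set Ω, MeasurableSet Y → 0 < μ Y →
      ∃ Z : Set Ω, MeasurableSet Z ∧ Z ⊆ Y ∧ 0 < μ Z ∧ μ Z < ⊤)
    (p : ℝ≥0∞) [Fact (1 ≤ p)]
    (T : ℝ → Lp X p μ →L[ℂ] Lp X p μ)
    (hT0 : T 0 = 1)
    (hTadd : ∀ t r : ℝ, 0 ≤ t → 0 ≤ r → T (t + r) = (T t).comp (T r))
    (hTcont : ∀ f : Lp X p μ, ContinuousOn (fun t => T t f) (Set.Ici 0))
    (A : ℝ → Ω → X →L[ℂ] X)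
    (hAcont : ∀ (s : Ω) (x : X), ContinuousOn (fun t => A t s x) (Set.Ici 0))
    (hpt : ∀ t : ℝ, 0 ≤ t → ∀ f : Lp X p μ,
      ∀ᵐ s ∂μ, (T t f : Ω →ₘ[μ] X) s = A t s ((f : Ω →ₘ[μ] X) s))
    (M : ℝ) (hM : 0 < M) :
    (∀ t : ℝ, 0 ≤ t → ‖T t‖ ≤ M) ↔
      ∃ N : Set Ω, μ N = 0 ∧ ∀ s ∈ Nᶜ, ∀ t : ℝ, 0 ≤ t → ‖A t s‖ ≤ M := by
  constructor
  · intro h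
    -- dense countable set
    obtain ⟨D, hDcount, hDdense⟩ := TopologicalSpace.exists_countable_dense X
    -- a.e. bound for rational times and x in D
    have key : ∀ᵐ s ∂μ, ∀ q : ℚ, 0 ≤ (q : ℝ) → ∀ x ∈ D, ‖A q s x‖ ≤ M * ‖x‖ := by
      rw [ae_all_iff]
      intro q
      rcases le_or_gt 0 (q : ℝ) with hq | hq
      · have hb : ∀ f, ‖T q f‖ ≤ M * ‖f‖ := fun f =>
          ((T (q : ℝ)).le_opNorm f).trans
            (mul_le_mul_of_nonneg_right (h _ hq) (norm_nonneg f))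
        have := fun x => stmt18_aux μ p (T q) (A q) (hpt q hq) M hM.le hb x
        rw [show (∀ᵐ s ∂μ, 0 ≤ (q:ℝ) → ∀ x ∈ D, ‖A q s x‖ ≤ M * ‖x‖) ↔
            ∀ᵐ s ∂μ, ∀ x ∈ D, ‖A q s x‖ ≤ M * ‖x‖ from
          eventually_congr (Eventually.of_forall fun s => by simp [hq])]
        rw [ae_ball_iff hDcount]
        intro x _
        exact this x
      · filter_upwards with s hq'
        exact absurd hq' (not_le.mpr hq)
    refine ⟨{s | ¬ ∀ q : ℚ, 0 ≤ (q : ℝ) → ∀ x ∈ D, ‖A q s x‖ ≤ M * ‖x‖}, key, ?_⟩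
    intro s hs t ht
    have hP : ∀ q : ℚ, 0 ≤ (q : ℝ) → ∀ x ∈ D, ‖A q s x‖ ≤ M * ‖x‖ := not_not.mp hs
    -- extend to all x for rational times
    have hQ : ∀ q : ℚ, 0 ≤ (q : ℝ) → ∀ x : X, ‖A q s x‖ ≤ M * ‖x‖ := by
      intro q hq x
      have hclosed : IsClosed {y : X | ‖A q s y‖ ≤ M * ‖y‖} :=
        isClosed_le (continuous_norm.comp (A q s).continuous)
          (continuous_const.mul continuous_norm)
      have hsub : D ⊆ {y : X | ‖A q s y‖ ≤ M * ‖y‖} := fun y hy => hP q hq y hy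
      have := hclosed.closure_subset_iff.mpr hsub
      rw [hDdense.closure_eq] at this
      exact this (Set.mem_univ x)
    -- extend to all t ≥ 0 by continuity, then conclude norm bound
    refine (A t s).opNorm_le_bound hM.le fun x => ?_
    -- rational sequence tending to t from above
    have hex : ∀ n : ℕ, ∃ q : ℚ, t < q ∧ (q : ℝ) < t + 1 / (n + 1) := fun n =>
      exists_rat_btwn (lt_add_of_pos_right t (by positivity))
    choose q hq1 hq2 using hex
    have hqt : Tendsto (fun n : ℕ => ((q n : ℝ))) atTop (𝓝 t) := by
      have h0 : Tendsto (fun n : ℕ => t + 1 / (n + 1 : ℝ)) atTop (𝓝 (t + 0)) :=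
        tendsto_const_nhds.add tendsto_one_div_add_atTop_nhds_zero_nat
      rw [add_zero] at h0
      exact tendsto_of_tendsto_of_tendsto_of_le_of_le tendsto_const_nhds h0
        (fun n => (hq1 n).le) (fun n => (hq2 n).le)
    have hqt' : Tendsto (fun n : ℕ => ((q n : ℝ))) atTop (𝓝[Set.Ici 0] t) := by
      rw [tendsto_nhdsWithin_iff]
      exact ⟨hqt, Eventually.of_forall fun n => le_of_lt (lt_of_le_of_lt ht (hq1 n))⟩
    have hcont : Tendsto (fun n : ℕ => A (q n) s x) atTop (𝓝 (A t s x)) :=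
      ((hAcont s x t ht).tendsto).comp hqt'
    have := (continuous_norm.tendsto _).comp hcont
    refine le_of_tendsto this (Eventually.of_forall fun n => ?_)
    exact hQ (q n) (le_of_lt (lt_of_le_of_lt ht (hq1 n))) x
  · rintro ⟨N, hN, hbd⟩ t ht
    refine (T t).opNorm_le_bound hM.le fun f => ?_
    have hNae : ∀ᵐ s ∂μ, s ∉ N := measure_eq_zero_iff_ae_notMem.mp hN
    have hae : ∀ᵐ s ∂μ, ‖(T t f : Ω →ₘ[μ] X) s‖ ≤ M * ‖(f : Ω →ₘ[μ] X) s‖ := by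
      filter_upwards [hpt t ht f, hNae] with s h1 h2
      rw [h1]
      exact ((A t s).le_opNorm _).trans
        (mul_le_mul_of_nonneg_right (hbd s h2 t ht) (norm_nonneg _))
    exact Lp.norm_le_mul_norm_of_ae_le_mul hae
end
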